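/- Let β be a probability vector with sorted entries β_1 ≥ … ≥ β_n ≥ 0 and γ a probability vector with sorted entries γ_1 ≥ … ≥ γ_k ≥ 0, and let 1 ≤ l_0 < n and 1 ≤ i_0 < k. If β_{l_0}·γ_{i_0} ≥ β_1·γ_{i_0+1} and β_{l_0}·γ_{i_0} ≥ β_{l_0+1}·γ_1, then the sum of the i_0·l_0 largest entries of β⊗γ equals (∑_{j=1}^{l_0} β_j)·(∑_{j=1}^{i_0} γ_j). -/
import Mathlib


open Finset

/-- Sum of the `l` largest entries of `x` (maximum over subsets of size `l`),
counted with multiplicity: this is `S_l(x)` from the paper. -/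
noncomputable def topSum {ι : Type*} [Fintype ι] (x : ι → ℝ) (l : ℕ) : ℝ :=
  sSup {s : ℝ | ∃ A : Finset ι, A.card = l ∧ s = ∑ i ∈ A, x i}

/-- Sum of the `l` smallest entries of `x` (minimum over subsets of size `l`). -/
noncomputable def botSum {ι : Type*} [Fintype ι] (x : ι → ℝ) (l : ℕ) : ℝ :=
  sInf {s : ℝ | ∃ A : Finset ι, A.card = l ∧ s = ∑ i ∈ A, x i}

/-- `x` is majorized by `y` (written `x ≺ y`): for every `1 ≤ l ≤ N`,
the sum of the `l` largest entries of `x` is at most that of `y`. -/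
def Majorized {ι : Type*} [Fintype ι] (x y : ι → ℝ) : Prop :=
  ∀ l : ℕ, 1 ≤ l → l ≤ Fintype.card ι → topSum x l ≤ topSum y l

/-- Tensor product of two vectors: all pairwise products of entries. -/
def tensor {ι κ : Type*} (x : ι → ℝ) (z : κ → ℝ) : ι × κ → ℝ :=
  fun p => x p.1 * z p.2

/-- `p`-fold tensor power of a vector. -/
def tensorPow {ι : Type*} (x : ι → ℝ) (p : ℕ) : (Fin p → ι) → ℝ :=
  fun f => ∏ j, x (f j)

/-- Sum of the first `l` entries of a vector `x : Fin n → ℝ`. -/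
def prefixSum {n : ℕ} (x : Fin n → ℝ) (l : ℕ) : ℝ :=
  ∑ j ∈ Finset.univ.filter (fun j : Fin n => (j : ℕ) < l), x j

/-- Sum of the entries of `x : Fin n → ℝ` from index `l` (0-based) on. -/
def suffixSum {n : ℕ} (x : Fin n → ℝ) (l : ℕ) : ℝ :=
  ∑ j ∈ Finset.univ.filter (fun j : Fin n => l ≤ (j : ℕ)), x j

/-- `E_l(x) = 1 - S_{l-1}(x)`: the sum of the entries of the probability vector `x`
from the `l`-th largest to the smallest. -/
noncomputable def Evec {ι : Type*} [Fintype ι] (x : ι → ℝ) (l : ℕ) : ℝ :=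
  1 - topSum x (l - 1)

/-- Vidal conversion probability `P(x → y) = min_{1 ≤ l ≤ N} E_l(x)/E_l(y)`. -/
noncomputable def vidalP {ι : Type*} [Fintype ι] (x y : ι → ℝ) : ℝ :=
  sInf {r : ℝ | ∃ l : ℕ, 1 ≤ l ∧ l ≤ Fintype.card ι ∧ r = Evec x l / Evec y l}

/-- Nonincreasing rearrangement of the entries of `x`, as a list. -/
noncomputable def sortedDesc {ι : Type*} [Fintype ι] (x : ι → ℝ) : List ℝ :=
  ((Finset.univ.val.map x).sort (· ≤ ·)).reverse

lemma card_filter_fin_lt {n l : ℕ} (h : l ≤ n) :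
    (Finset.univ.filter (fun j : Fin n => (j : ℕ) < l)).card = l := by
  have : (Finset.univ.filter (fun j : Fin n => (j : ℕ) < l))
      = Finset.map (Fin.castLEEmb h) Finset.univ := by
    ext p
    simp only [Finset.mem_filter, Finset.mem_univ, true_and, Finset.mem_map,
      Fin.castLEEmb, Function.Embedding.coeFn_mk]
    constructor
    · intro hp
      exact ⟨⟨p, hp⟩, rfl⟩
    · rintro ⟨a, rfl⟩
      exact a.isLt
  rw [this, Finset.card_map, Finset.card_univ, Fintype.card_fin]

/-- If `A` and `R` have the same cardinality and every entry in `R` is at least `m`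
while every entry outside `R` is at most `m`, then `∑ A ≤ ∑ R`. -/
lemma sum_le_of_swap {ι : Type*} [Fintype ι] [DecidableEq ι] (x : ι → ℝ) (m : ℝ)
    (A R : Finset ι) (hcard : A.card = R.card)
    (hR : ∀ i ∈ R, m ≤ x i) (hRc : ∀ i ∉ R, x i ≤ m) :
    ∑ i ∈ A, x i ≤ ∑ i ∈ R, x i := by
  have hA : ∑ i ∈ A, x i = ∑ i ∈ A ∩ R, x i + ∑ i ∈ A \ R, x i := by
    rw [Finset.sum_inter_add_sum_sdiff]
  have hRs : ∑ i ∈ R, x i = ∑ i ∈ A ∩ R, x i + ∑ i ∈ R \ A, x i := by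
    rw [Finset.inter_comm, Finset.sum_inter_add_sum_sdiff]
  have hc : (A \ R).card = (R \ A).card := by
    have h1 := Finset.card_sdiff_add_card_inter A R
    have h2 := Finset.card_sdiff_add_card_inter R A
    rw [Finset.inter_comm R A] at h2
    omega
  have hup : ∑ i ∈ A \ R, x i ≤ (A \ R).card • m := by
    apply Finset.sum_le_card_nsmul
    intro i hi
    exact hRc i (Finset.mem_sdiff.mp hi).2
  have hlo : (R \ A).card • m ≤ ∑ i ∈ R \ A, x i := by
    apply Finset.card_nsmul_le_sum
    intro i hi
    exact hR i (Finset.mem_sdiff.mp hi).1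
  rw [hA, hRs]
  have := hc ▸ hup
  linarith [le_trans this hlo]

theorem stmt_13 {n k : ℕ} (β : Fin n → ℝ) (γ : Fin k → ℝ)
    (hβa : Antitone β) (hγa : Antitone γ)
    (hβ0 : ∀ i, 0 ≤ β i) (hβ1 : ∑ i, β i = 1)
    (hγ0 : ∀ i, 0 ≤ γ i) (hγ1 : ∑ i, γ i = 1)
    (l0 i0 : ℕ) (hl01 : 1 ≤ l0) (hl0n : l0 < n) (hi01 : 1 ≤ i0) (hi0k : i0 < k)
    (h1 : β ⟨l0 - 1, by omega⟩ * γ ⟨i0 - 1, by omega⟩ ≥ β ⟨0, by omega⟩ * γ ⟨i0, hi0k⟩)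
    (h2 : β ⟨l0 - 1, by omega⟩ * γ ⟨i0 - 1, by omega⟩ ≥ β ⟨l0, hl0n⟩ * γ ⟨0, by omega⟩) :
    topSum (tensor β γ) (i0 * l0) = prefixSum β l0 * prefixSum γ i0 := by
  classical
  set Rβ : Finset (Fin n) := Finset.univ.filter (fun j : Fin n => (j : ℕ) < l0) with hRβ
  set Rγ : Finset (Fin k) := Finset.univ.filter (fun j : Fin k => (j : ℕ) < i0) with hRγ
  set R : Finset (Fin n × Fin k) := Rβ ×ˢ Rγ with hRdef
  have hcardR : R.card = i0 * l0 := by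
    rw [hRdef, Finset.card_product, card_filter_fin_lt hl0n.le, card_filter_fin_lt hi0k.le,
      Nat.mul_comm]
  have hsumR : ∑ p ∈ R, tensor β γ p = prefixSum β l0 * prefixSum γ i0 := by
    rw [hRdef, Finset.sum_product]
    simp only [tensor]
    rw [← Finset.sum_mul_sum]
    rfl
  set m : ℝ := β ⟨l0 - 1, by omega⟩ * γ ⟨i0 - 1, by omega⟩ with hm
  have hRlow : ∀ p ∈ R, m ≤ tensor β γ p := by
    rintro ⟨a, b⟩ hp
    rw [hRdef, Finset.mem_product] at hp
    obtain ⟨ha, hb⟩ := hp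
    simp only [hRβ, hRγ, Finset.mem_filter] at ha hb
    have ha' : a ≤ (⟨l0 - 1, by omega⟩ : Fin n) := by
      rw [Fin.le_def]; simp; omega
    have hb' : b ≤ (⟨i0 - 1, by omega⟩ : Fin k) := by
      rw [Fin.le_def]; simp; omega
    exact mul_le_mul (hβa ha') (hγa hb') (hγ0 _) (hβ0 _)
  have hRhigh : ∀ p ∉ R, tensor β γ p ≤ m := by
    rintro ⟨a, b⟩ hp
    rw [hRdef, Finset.mem_product] at hp
    push_neg at hp
    simp only [hRβ, hRγ, Finset.mem_filter, Finset.mem_univ, true_and, not_lt] at hp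
    by_cases hal : (a : ℕ) < l0
    · have hb := hp hal
      have ha' : β a ≤ β ⟨0, by omega⟩ := hβa (by rw [Fin.le_def]; simp)
      have hb' : γ b ≤ γ ⟨i0, hi0k⟩ := hγa (by rw [Fin.le_def]; simpa)
      calc tensor β γ (a, b) = β a * γ b := rfl
        _ ≤ β ⟨0, by omega⟩ * γ ⟨i0, hi0k⟩ :=
          mul_le_mul ha' hb' (hγ0 _) (hβ0 _)
        _ ≤ m := h1
    · have ha' : β a ≤ β ⟨l0, hl0n⟩ := hβa (by rw [Fin.le_def]; simp; omega)
      have hb' : γ b ≤ γ ⟨0, by omega⟩ := hγa (by rw [Fin.le_def]; simp)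
      calc tensor β γ (a, b) = β a * γ b := rfl
        _ ≤ β ⟨l0, hl0n⟩ * γ ⟨0, by omega⟩ :=
          mul_le_mul ha' hb' (hγ0 _) (hβ0 _)
        _ ≤ m := h2
  have hub : ∀ s ∈ {s : ℝ | ∃ A : Finset (Fin n × Fin k), A.card = i0 * l0 ∧
      s = ∑ i ∈ A, tensor β γ i}, s ≤ ∑ p ∈ R, tensor β γ p := by
    rintro s ⟨A, hA, rfl⟩
    exact sum_le_of_swap (tensor β γ) m A R (hA.trans hcardR.symm) hRlow hRhigh
  have hmem : (∑ p ∈ R, tensor β γ p) ∈ {s : ℝ | ∃ A : Finset (Fin n × Fin k),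
      A.card = i0 * l0 ∧ s = ∑ i ∈ A, tensor β γ i} := ⟨R, hcardR, rfl⟩
  rw [topSum, ← hsumR]
  exact le_antisymm (csSup_le ⟨_, hmem⟩ hub) (le_csSup ⟨_, hub⟩ hmem)
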